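/- arXiv:1605.00507 — 7 statements merged into one kernel-verified Lean document; each statement's English description precedes it below -/
import Mathlib

section
/- Suppose R_n is differentiable and satisfies the Δ-RSC condition with constant κ > 0 for sparsity level s: R_n(β+δ) − R_n(β) − ∇R_n(β)^T δ ≥ κ‖δ‖₂² for all β ∈ Δ^p with ‖β‖₀ ≤ s and all δ ∈ C^Δ(s). Let β* ∈ Δ^p with ‖β*‖₀ ≤ s, and let β̂ minimize R_n over Δ^p. Set λ* = ‖∇R_n(β*)‖∞. Then ‖β̂ − β*‖₂² ≤ 4sλ*²/κ² and ‖β̂ − β*‖₁ ≤ 4sλ*/κ. -/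
/-- Adaptation to sparsity of ERM over the simplex under the `Δ`-RSC condition:
`‖β̂ − β*‖₂² ≤ 4sλ*²/κ²` and `‖β̂ − β*‖₁ ≤ 4sλ*/κ` with
`λ* = ‖∇R_n(β*)‖∞`. -/
theorem stmt_6 (p s : ℕ) (Rn : (Fin p → ℝ) → ℝ) (hdiff : Differentiable ℝ Rn)
    (κ : ℝ) (hκ : 0 < κ)
    (hRSC : ∀ β ∈ stdSimplex ℝ (Fin p),
      (Finset.univ.filter fun j => β j ≠ 0).card ≤ s →
      ∀ δ : Fin p → ℝ,
        (∃ J : Finset (Fin p), J.card ≤ s ∧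
          (∑ j ∈ Jᶜ, δ j) = -(∑ j ∈ J, δ j) ∧ ∀ j ∈ Jᶜ, 0 ≤ δ j) →
        Rn (β + δ) - Rn β - fderiv ℝ Rn β δ ≥ κ * ∑ j, (δ j) ^ 2)
    (βstar : Fin p → ℝ) (hβstar : βstar ∈ stdSimplex ℝ (Fin p))
    (hsparse : (Finset.univ.filter fun j => βstar j ≠ 0).card ≤ s)
    (βhat : Fin p → ℝ) (hβhat : βhat ∈ stdSimplex ℝ (Fin p))
    (hmin : ∀ β ∈ stdSimplex ℝ (Fin p), Rn βhat ≤ Rn β)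
    (lamstar : ℝ) (hlam : lamstar = ⨆ j : Fin p, |fderiv ℝ Rn βstar (Pi.single j 1)|) :
    (∑ j, (βhat j - βstar j) ^ 2) ≤ 4 * s * lamstar ^ 2 / κ ^ 2 ∧
    (∑ j, |βhat j - βstar j|) ≤ 4 * s * lamstar / κ := by
  set δ : Fin p → ℝ := fun j => βhat j - βstar j with hδ
  set J : Finset (Fin p) := Finset.univ.filter fun j => βstar j ≠ 0 with hJdef
  have hsum0 : ∑ j, δ j = 0 := by
    simp only [hδ, Finset.sum_sub_distrib, hβstar.2, hβhat.2, sub_self]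
  have hsplit : (∑ j ∈ J, δ j) + ∑ j ∈ Jᶜ, δ j = ∑ j, δ j :=
    Finset.sum_add_sum_compl J δ
  have hconeEq : (∑ j ∈ Jᶜ, δ j) = -(∑ j ∈ J, δ j) := by linarith
  have hconePos : ∀ j ∈ Jᶜ, 0 ≤ δ j := by
    intro j hj
    simp only [hJdef, Finset.mem_compl, Finset.mem_filter, Finset.mem_univ,
      true_and, not_not] at hj
    have := hβhat.1 j
    simp only [hδ, hj, sub_zero]
    exact this
  have hrsc := hRSC βstar hβstar hsparse δ ⟨J, hsparse, hconeEq, hconePos⟩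
  have hadd : βstar + δ = βhat := by funext j; simp [hδ]
  rw [hadd] at hrsc
  have hRle : Rn βhat ≤ Rn βstar := hmin βstar hβstar
  set L := fderiv ℝ Rn βstar with hL
  have hδrep : δ = ∑ j, δ j • (Pi.single j (1 : ℝ) : Fin p → ℝ) := by
    funext i
    simp only [Finset.sum_apply, Pi.smul_apply, Pi.single_apply, smul_eq_mul,
      mul_ite, mul_one, mul_zero, Finset.sum_ite_eq, Finset.mem_univ, if_true]
  have hLδ : L δ = ∑ j, δ j * L (Pi.single j 1) := by
    conv_lhs => rw [hδrep]
    rw [map_sum]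
    simp [map_smul]
  have hlamnn : 0 ≤ lamstar := by
    rw [hlam]; exact Real.iSup_nonneg fun j => abs_nonneg _
  have hle : ∀ j, |L (Pi.single j 1)| ≤ lamstar := by
    intro j; rw [hlam]
    exact le_ciSup (f := fun j => |L (Pi.single j 1)|)
      (Set.Finite.bddAbove (Set.finite_range _)) j
  have h2 : -(L δ) ≤ lamstar * ∑ j, |δ j| := by
    rw [hLδ, ← Finset.sum_neg_distrib, Finset.mul_sum]
    apply Finset.sum_le_sum
    intro j _
    calc -(δ j * L (Pi.single j 1)) ≤ |δ j * L (Pi.single j 1)| := neg_le_abs _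
      _ = |δ j| * |L (Pi.single j 1)| := abs_mul _ _
      _ ≤ |δ j| * lamstar := mul_le_mul_of_nonneg_left (hle j) (abs_nonneg _)
      _ = lamstar * |δ j| := mul_comm _ _
  set Q : ℝ := ∑ j, δ j ^ 2 with hQ
  set A : ℝ := ∑ j, |δ j| with hA
  set T : ℝ := ∑ j ∈ J, |δ j| with hT
  have hbound : κ * Q ≤ lamstar * A := by
    have : κ * Q ≤ -(L δ) := by linarith
    linarith
  have hA2T : A ≤ 2 * T := by
    have hcsplit : T + ∑ j ∈ Jᶜ, |δ j| = A := Finset.sum_add_sum_compl J _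
    have h1 : (∑ j ∈ Jᶜ, |δ j|) = ∑ j ∈ Jᶜ, δ j := by
      apply Finset.sum_congr rfl
      intro j hj; exact abs_of_nonneg (hconePos j hj)
    have h3 : -(∑ j ∈ J, δ j) ≤ T := by
      calc -(∑ j ∈ J, δ j) ≤ |∑ j ∈ J, δ j| := neg_le_abs _
        _ ≤ ∑ j ∈ J, |δ j| := Finset.abs_sum_le_sum_abs _ _
    have : (∑ j ∈ Jᶜ, |δ j|) ≤ T := by rw [h1, hconeEq]; exact h3
    linarith
  have hTQ : T ^ 2 ≤ s * Q := by
    have hcs := Finset.sum_mul_sq_le_sq_mul_sq J (fun _ => (1:ℝ)) (fun j => |δ j|)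
    simp only [one_mul, one_pow] at hcs
    have hJcard : (∑ _j ∈ J, (1:ℝ)) = (J.card : ℝ) := by simp
    have hsub : (∑ j ∈ J, |δ j| ^ 2) ≤ Q := by
      rw [hQ]
      apply Finset.sum_le_sum_of_subset_of_nonneg (Finset.subset_univ J)
        (fun j _ _ => sq_nonneg _) |>.trans_eq'
      exact Finset.sum_congr rfl fun j _ => by rw [sq_abs]
    have hcard : (J.card : ℝ) ≤ (s : ℝ) := by exact_mod_cast hsparse
    calc T ^ 2 ≤ (∑ _j ∈ J, (1:ℝ)) * ∑ j ∈ J, |δ j| ^ 2 := hcs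
      _ = (J.card : ℝ) * ∑ j ∈ J, |δ j| ^ 2 := by rw [hJcard]
      _ ≤ (s : ℝ) * Q := by
          apply mul_le_mul hcard hsub (Finset.sum_nonneg fun j _ => sq_nonneg _)
            (Nat.cast_nonneg s)
  have hQnn : 0 ≤ Q := Finset.sum_nonneg fun j _ => sq_nonneg _
  have hTnn : 0 ≤ T := Finset.sum_nonneg fun j _ => abs_nonneg _
  have hAnn : 0 ≤ A := Finset.sum_nonneg fun j _ => abs_nonneg _
  have hQle : Q ≤ 4 * s * lamstar ^ 2 / κ ^ 2 := by
    rcases eq_or_lt_of_le hQnn with h0 | h0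
    · rw [← h0]; positivity
    · rw [le_div_iff₀ (by positivity)]
      have hk1 : κ * Q ≤ 2 * lamstar * T := by
        nlinarith [mul_le_mul_of_nonneg_left hA2T hlamnn]
      have hk2 : (κ * Q) * (κ * Q) ≤ (2 * lamstar * T) * (2 * lamstar * T) :=
        mul_le_mul hk1 hk1 (by positivity) (le_trans (by positivity) hk1)
      have hk3 : 4 * lamstar ^ 2 * T ^ 2 ≤ 4 * lamstar ^ 2 * (s * Q) :=
        mul_le_mul_of_nonneg_left hTQ (by positivity)
      have e1 : (κ * Q) * (κ * Q) = κ ^ 2 * Q ^ 2 := by ring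
      have e2 : (2 * lamstar * T) * (2 * lamstar * T) = 4 * lamstar ^ 2 * T ^ 2 := by ring
      have e3 : κ ^ 2 * Q ^ 2 = (Q * κ ^ 2) * Q := by ring
      have e4 : 4 * lamstar ^ 2 * ((s:ℝ) * Q) = (4 * s * lamstar ^ 2) * Q := by ring
      have hk5 : (Q * κ ^ 2) * Q ≤ (4 * s * lamstar ^ 2) * Q := by linarith
      exact le_of_mul_le_mul_right hk5 h0
  have hBnn : 0 ≤ 2 * (s:ℝ) * lamstar / κ := by positivity
  have hTle : T ≤ 2 * s * lamstar / κ := by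
    have h1 : T ^ 2 ≤ (2 * (s:ℝ) * lamstar / κ) ^ 2 := by
      have h2 : (s:ℝ) * Q ≤ (s:ℝ) * (4 * s * lamstar ^ 2 / κ ^ 2) :=
        mul_le_mul_of_nonneg_left hQle (Nat.cast_nonneg s)
      have h3 : (2 * (s:ℝ) * lamstar / κ) ^ 2 = (s:ℝ) * (4 * s * lamstar ^ 2 / κ ^ 2) := by
        field_simp; ring
      linarith
    exact (pow_le_pow_iff_left₀ hTnn hBnn two_ne_zero).mp h1
  constructor
  · exact hQle
  · calc A ≤ 2 * T := hA2T
      _ ≤ 2 * (2 * s * lamstar / κ) := by linarith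
      _ = 4 * s * lamstar / κ := by ring
end

section
/- Consider the denoising objective f(β) = (1/n)‖Z − β‖₂² − λ‖β‖₂² over β ∈ Δ^n, with Z ∈ ℝ^n having pairwise distinct entries. If λ > 1/n, the unique minimizer is the standard basis vector e_i with Z_i = max_k Z_k. If λ = 1/n, every minimizer equals this same e_i. -/
/-- Denoising with negative `ℓ₂`-regularization, concave regime: for
`f(β) = (1/n)‖Z − β‖₂² − λ‖β‖₂²` over `Δ^n` with `Z` having pairwise distinct
entries, if `λ > 1/n` the unique minimizer is `e_i` with `Z_i = max_k Z_k`;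
if `λ = 1/n` every minimizer equals this same `e_i`. -/
theorem stmt_8 (n : ℕ) (hn : 0 < n) (Z : Fin n → ℝ) (hZ : Function.Injective Z)
    (lam : ℝ) (i : Fin n) (hi : ∀ k, Z k ≤ Z i)
    (f : (Fin n → ℝ) → ℝ)
    (hf : ∀ β, f β = (1 / n) * (∑ k, (Z k - β k) ^ 2) - lam * ∑ k, (β k) ^ 2) :
    ((1 / n : ℝ) < lam →
      ∀ β ∈ stdSimplex ℝ (Fin n), β ≠ Pi.single i 1 → f (Pi.single i 1) < f β) ∧
    (lam = (1 / n : ℝ) →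
      ∀ β ∈ stdSimplex ℝ (Fin n),
        (∀ γ ∈ stdSimplex ℝ (Fin n), f β ≤ f γ) → β = Pi.single i 1) := by
  classical
  have hn' : (0:ℝ) < n := by exact_mod_cast hn
  set e : Fin n → ℝ := Pi.single i 1 with he
  have heS : e ∈ stdSimplex ℝ (Fin n) := by
    constructor
    · intro k; by_cases hk : k = i <;> simp [he, hk, Pi.single_apply]
    · simp [he, Pi.single_apply]
  have hefe : ∑ k, Z k * e k = Z i := by
    simp [he, Pi.single_apply, mul_ite]
  have hee : ∑ k, (e k) ^ 2 = 1 := by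
    simp [he, Pi.single_apply, ite_pow]
  have hfexp : ∀ β : Fin n → ℝ, f β =
      (1 / n) * (∑ k, (Z k) ^ 2) - (2 / n) * (∑ k, Z k * β k)
        + (1 / n - lam) * (∑ k, (β k) ^ 2) := by
    intro β
    rw [hf]
    have h : ∀ k ∈ Finset.univ, (Z k - β k) ^ 2
        = (Z k) ^ 2 - 2 * (Z k * β k) + (β k) ^ 2 := fun k _ => by ring
    rw [Finset.sum_congr rfl h]
    rw [Finset.sum_add_distrib, Finset.sum_sub_distrib, ← Finset.mul_sum]
    ring
  -- each coordinate is ≤ 1, so sum of squares ≤ 1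
  have hbound : ∀ β ∈ stdSimplex ℝ (Fin n), ∑ k, (β k) ^ 2 ≤ 1 := by
    intro β hβ
    have h1 : ∀ k, β k ≤ 1 := by
      intro k
      have := Finset.single_le_sum (f := β) (fun j _ => hβ.1 j) (Finset.mem_univ k)
      simpa [hβ.2] using this
    calc ∑ k, (β k) ^ 2 ≤ ∑ k, β k :=
          Finset.sum_le_sum (fun k _ => by nlinarith [hβ.1 k, h1 k])
      _ = 1 := hβ.2
  -- the gap identity
  have hgap : ∀ β ∈ stdSimplex ℝ (Fin n),
      Z i - ∑ k, Z k * β k = ∑ k, (Z i - Z k) * β k := by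
    intro β hβ
    have : ∑ k, (Z i - Z k) * β k = ∑ k, (Z i * β k - Z k * β k) := by
      apply Finset.sum_congr rfl; intro k _; ring
    rw [this, Finset.sum_sub_distrib, ← Finset.mul_sum, hβ.2]
    ring
  -- strict inequality for β ≠ e
  have hstrict : ∀ β ∈ stdSimplex ℝ (Fin n), β ≠ e → ∑ k, Z k * β k < Z i := by
    intro β hβ hne
    have hex : ∃ k, k ≠ i ∧ 0 < β k := by
      by_contra hno
      push_neg at hno
      have hz : ∀ k, k ≠ i → β k = 0 := fun k hk => le_antisymm (hno k hk) (hβ.1 k)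
      apply hne
      have hβi : β i = 1 := by
        have := hβ.2
        rwa [Finset.sum_eq_single i (fun b _ hb => hz b hb) (fun h => absurd (Finset.mem_univ i) h)] at this
      funext k
      by_cases hk : k = i
      · simp [he, hk, Pi.single_apply, hβi]
      · simp [he, hk, Pi.single_apply, hz k hk]
    obtain ⟨k0, hk0, hpos⟩ := hex
    have hterm : 0 < (Z i - Z k0) * β k0 := by
      have : Z k0 < Z i := lt_of_le_of_ne (hi k0) (fun h => hk0 (hZ h))
      exact mul_pos (by linarith) hpos
    have hsum : (Z i - Z k0) * β k0 ≤ ∑ k, (Z i - Z k) * β k :=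
      Finset.single_le_sum (f := fun k => (Z i - Z k) * β k)
        (fun j _ => mul_nonneg (by linarith [hi j]) (hβ.1 j)) (Finset.mem_univ k0)
    have := hgap β hβ
    linarith
  constructor
  · intro hlam β hβ hne
    have h1 : ∑ k, Z k * β k < Z i := hstrict β hβ hne
    have h2 : ∑ k, (β k) ^ 2 ≤ 1 := hbound β hβ
    rw [hfexp, hfexp, hefe, hee]
    have hp : (0:ℝ) < 2 / n := by positivity
    nlinarith [mul_pos hp (sub_pos.mpr h1),
      mul_nonneg (sub_nonneg.mpr hlam.le) (sub_nonneg.mpr h2)]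
  · intro hlam β hβ hmin
    by_contra hne
    have h1 : ∑ k, Z k * β k < Z i := hstrict β hβ hne
    have := hmin e heS
    rw [hfexp, hfexp, hefe, hee, hlam] at this
    have hp : (0:ℝ) < 2 / n := by positivity
    nlinarith [mul_pos hp (sub_pos.mpr h1)]
end

section
/- Let Z = β* + ε ∈ ℝ^n with β* ∈ Δ^n, ‖β*‖₀ = s, supported on S. Suppose 2s·max_i|ε_i|/n < λ < 1/n and min_{i∈S} β*_i > nλ/s + 2 max_i|ε_i|. Then the minimizer β̂ of (1/n)‖Z − β‖₂² − λ‖β‖₂² over Δ^n has support exactly S. -/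
open Finset

lemma kkt_aux {n : ℕ} (hn : 0 < n) (Z βhat : Fin n → ℝ) (lam : ℝ)
    (hβhat : βhat ∈ stdSimplex ℝ (Fin n)) (hγ : 0 < 1 - n * lam)
    (f : (Fin n → ℝ) → ℝ)
    (hf : ∀ β, f β = (1 / n) * (∑ k, (Z k - β k) ^ 2) - lam * ∑ k, (β k) ^ 2)
    (hmin : ∀ β ∈ stdSimplex ℝ (Fin n), f βhat ≤ f β)
    (k l : Fin n) (hk : 0 < βhat k) :
    Z l - (1 - n * lam) * βhat l ≤ Z k - (1 - n * lam) * βhat k := by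
  by_cases hkl : k = l
  · subst hkl; exact le_rfl
  by_contra hcon
  push_neg at hcon
  have hlk : l ≠ k := Ne.symm hkl
  set γ : ℝ := 1 - n * lam with hγdef
  set A : ℝ := (Z k - γ * βhat k) - (Z l - γ * βhat l) with hA
  have hA0 : A < 0 := by simp only [hA]; linarith
  set t : ℝ := min (βhat k) (-A / (2 * γ)) with ht
  have ht0 : 0 < t := lt_min hk (div_pos (by linarith) (by positivity))
  have htk : t ≤ βhat k := min_le_left _ _
  have htA : t ≤ -A / (2 * γ) := min_le_right _ _
  set β' : Fin n → ℝ :=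
    fun m => βhat m + (if m = l then t else 0) - (if m = k then t else 0) with hβ'
  have hβ'mem : β' ∈ stdSimplex ℝ (Fin n) := by
    constructor
    · intro m
      by_cases h1 : m = l
      · simp [hβ', h1, hlk]
        have := hβhat.1 l
        linarith
      · by_cases h2 : m = k
        · simp [hβ', h2, hkl, h1]
          linarith
        · simp [hβ', h1, h2]
          exact hβhat.1 m
    · have : ∑ m, β' m = ∑ m, βhat m + t - t := by
        simp [hβ', Finset.sum_add_distrib, Finset.sum_sub_distrib,
          Finset.sum_ite_eq' Finset.univ]
      rw [this, hβhat.2]; ring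
  have hsq1 : ∑ m, (Z m - β' m) ^ 2 =
      ∑ m, (Z m - βhat m) ^ 2 + (-(2 * t * (Z l - βhat l)) + t ^ 2)
        + (2 * t * (Z k - βhat k) + t ^ 2) := by
    have h1 : ∀ m, (Z m - β' m) ^ 2 = (Z m - βhat m) ^ 2
        + (if m = l then -(2 * t * (Z m - βhat m)) + t ^ 2 else 0)
        + (if m = k then 2 * t * (Z m - βhat m) + t ^ 2 else 0) := by
      intro m
      by_cases h1 : m = l
      · simp [hβ', h1, hlk]
        ring
      · by_cases h2 : m = k
        · simp [hβ', h2, hkl, h1]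
          ring
        · simp [hβ', h1, h2]
    rw [Finset.sum_congr rfl (fun m _ => h1 m)]
    simp [Finset.sum_add_distrib, Finset.sum_ite_eq' Finset.univ]
  have hsq2 : ∑ m, (β' m) ^ 2 =
      ∑ m, (βhat m) ^ 2 + (2 * t * βhat l + t ^ 2)
        + (-(2 * t * βhat k) + t ^ 2) := by
    have h1 : ∀ m, (β' m) ^ 2 = (βhat m) ^ 2
        + (if m = l then 2 * t * βhat m + t ^ 2 else 0)
        + (if m = k then -(2 * t * βhat m) + t ^ 2 else 0) := by
      intro m
      by_cases h1 : m = l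
      · simp [hβ', h1, hlk]
        ring
      · by_cases h2 : m = k
        · simp [hβ', h2, hkl, h1]
          ring
        · simp [hβ', h1, h2]
    rw [Finset.sum_congr rfl (fun m _ => h1 m)]
    simp [Finset.sum_add_distrib, Finset.sum_ite_eq' Finset.univ]
  have hle := hmin β' hβ'mem
  rw [hf β', hf βhat, hsq1, hsq2] at hle
  have hn' : (0 : ℝ) < n := by exact_mod_cast hn
  -- 0 ≤ (1/n) * X - lam * Y where ...
  have hkey : 0 ≤ (2 * t / n) * (A + γ * t) := by
    have heq : (2 * t / n) * (A + γ * t) =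
        ((1 / n) * (∑ m, (Z m - βhat m) ^ 2 + (-(2 * t * (Z l - βhat l)) + t ^ 2)
          + (2 * t * (Z k - βhat k) + t ^ 2))
          - lam * (∑ m, (βhat m) ^ 2 + (2 * t * βhat l + t ^ 2)
          + (-(2 * t * βhat k) + t ^ 2)))
        - ((1 / n) * (∑ m, (Z m - βhat m) ^ 2) - lam * ∑ m, (βhat m) ^ 2) := by
      field_simp [hγdef]
      ring
    rw [heq]
    linarith
  have hgt : A + γ * t < 0 := by
    have h2 : t * (2 * γ) ≤ -A := by
      rw [le_div_iff₀ (by positivity : (0:ℝ) < 2 * γ)] at htA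
      exact htA
    linarith
  have h2tn : 0 < 2 * t / n := by positivity
  nlinarith [mul_pos h2tn (neg_pos.2 hgt)]



/-- Support recovery for denoising with negative `ℓ₂`-regularization: under the
conditions `2s·max_i|ε_i|/n < λ < 1/n` and `min_{i∈S} β*_i > nλ/s + 2 max_i|ε_i|`,
the minimizer of `(1/n)‖Z − β‖₂² − λ‖β‖₂²` over `Δ^n` has support exactly `S`. -/
theorem stmt_10 (n s : ℕ) (hn : 0 < n)
    (βstar : Fin n → ℝ) (hβstar : βstar ∈ stdSimplex ℝ (Fin n))
    (S : Finset (Fin n)) (hS : ∀ i, i ∈ S ↔ βstar i ≠ 0) (hcard : S.card = s)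
    (ε : Fin n → ℝ) (Z : Fin n → ℝ) (hZ : Z = βstar + ε)
    (lam : ℝ)
    (hlam1 : 2 * s * (⨆ i, |ε i|) / n < lam) (hlam2 : lam < 1 / n)
    (hbmin : ∀ i ∈ S, βstar i > n * lam / s + 2 * ⨆ i, |ε i|)
    (f : (Fin n → ℝ) → ℝ)
    (hf : ∀ β, f β = (1 / n) * (∑ k, (Z k - β k) ^ 2) - lam * ∑ k, (β k) ^ 2)
    (βhat : Fin n → ℝ) (hβhat : βhat ∈ stdSimplex ℝ (Fin n))
    (hmin : ∀ β ∈ stdSimplex ℝ (Fin n), f βhat ≤ f β) :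
    ∀ i, βhat i ≠ 0 ↔ i ∈ S := by
  have hn' : (0 : ℝ) < n := by exact_mod_cast hn
  set E : ℝ := ⨆ i, |ε i| with hEdef
  have hE : ∀ k, |ε k| ≤ E := fun k =>
    le_ciSup (f := fun i => |ε i|) (Set.Finite.bddAbove (Set.finite_range _)) k
  have hE0 : 0 ≤ E := le_trans (abs_nonneg _) (hE ⟨0, hn⟩)
  -- S is nonempty
  have hSne : S.Nonempty := by
    by_contra h
    rw [Finset.not_nonempty_iff_eq_empty] at h
    have h1 : ∀ i, βstar i = 0 := by
      intro i
      by_contra hb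
      have := (hS i).2 hb
      simp [h] at this
    have := hβstar.2
    simp [h1] at this
  have hs0 : 0 < s := by rw [← hcard]; exact Finset.card_pos.2 hSne
  have hs0' : (0 : ℝ) < s := by exact_mod_cast hs0
  have hsE : 2 * s * E < n * lam := by
    rw [div_lt_iff₀ hn'] at hlam1
    linarith
  have hnl0 : 0 < n * lam := lt_of_le_of_lt (by positivity) hsE
  set γ : ℝ := 1 - n * lam with hγdef
  have hγ : 0 < γ := by
    rw [lt_div_iff₀ hn'] at hlam2
    simp only [hγdef]; linarith
  have hZk : ∀ k, Z k = βstar k + ε k := fun k => by rw [hZ]; rfl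
  have kkt : ∀ k l : Fin n, 0 < βhat k →
      Z l - γ * βhat l ≤ Z k - γ * βhat k :=
    fun k l hk => kkt_aux hn Z βhat lam hβhat hγ f hf hmin k l hk
  have hsumS : ∑ j ∈ S, βstar j = 1 := by
    rw [← hβstar.2]
    exact Finset.sum_subset (Finset.subset_univ S)
      (fun x _ hx => by_contra (fun hc => hx ((hS x).2 hc)))
  have hZS : (1 : ℝ) - s * E ≤ ∑ j ∈ S, Z j := by
    have h1 : ∑ j ∈ S, Z j = 1 + ∑ j ∈ S, ε j := by
      simp only [hZk, Finset.sum_add_distrib, hsumS]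
    have h2 : -(s * E) ≤ ∑ j ∈ S, ε j := by
      have : ∑ j ∈ S, (-E) ≤ ∑ j ∈ S, ε j :=
        Finset.sum_le_sum (fun j _ => by have := hE j; cases abs_le.1 this; linarith)
      simpa [Finset.sum_const, hcard, mul_comm] using this
    linarith
  -- Claim A : off-support coordinates vanish
  have claimA : ∀ i, i ∉ S → βhat i = 0 := by
    intro i hiS
    by_contra hne
    have hβi : 0 < βhat i := lt_of_le_of_ne (hβhat.1 i) (Ne.symm hne)
    set M : ℝ := Z i - γ * βhat i with hM
    have hβstari : βstar i = 0 := by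
      by_contra hb; exact hiS ((hS i).2 hb)
    have hZi : Z i ≤ E := by
      rw [hZk, hβstari]
      have := hE i
      cases abs_le.1 this
      linarith
    have hMltE : M < E := by
      have : 0 < γ * βhat i := mul_pos hγ hβi
      simp only [hM]; linarith
    have hMge : ∀ l, Z l - γ * βhat l ≤ M := fun l => kkt i l hβi
    have hposS : ∀ j ∈ S, 0 < βhat j := by
      intro j hj
      rcases lt_or_eq_of_le (hβhat.1 j) with h | h
      · exact h
      · exfalso
        have h1 : Z j ≤ M := by have := hMge j; rw [← h] at this; simpa using this
        have h2 : n * lam / s + E ≤ Z j := by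
          rw [hZk]
          have hb := hbmin j hj
          have := hE j
          cases abs_le.1 this
          linarith
        have h3 : 0 < n * lam / s := by positivity
        linarith
    have hMj : ∀ j ∈ S, Z j - γ * βhat j = M := fun j hj =>
      le_antisymm (hMge j) (kkt j i (hposS j hj))
    have h1 : ∑ j ∈ Insert.insert i S, γ * βhat j ≤ γ := by
      calc ∑ j ∈ insert i S, γ * βhat j ≤ ∑ j, γ * βhat j :=
            Finset.sum_le_sum_of_subset_of_nonneg (Finset.subset_univ _)
              (fun m _ _ => mul_nonneg hγ.le (hβhat.1 m))
        _ = γ := by rw [← Finset.mul_sum, hβhat.2, mul_one]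
    rw [Finset.sum_insert hiS] at h1
    have h2 : ∑ j ∈ S, γ * βhat j = ∑ j ∈ S, Z j - s * M := by
      have : ∀ j ∈ S, γ * βhat j = Z j - M := by
        intro j hj; have := hMj j hj; linarith
      rw [Finset.sum_congr rfl this, Finset.sum_sub_distrib, Finset.sum_const,
        hcard, nsmul_eq_mul]
    have h3 : γ * βhat i = Z i - M := by simp only [hM]; ring
    -- γ ≥ (Z i - M) + (∑_S Z - s M), Z i - M > 0, so s*M > ∑_S Z - γ ≥ nλ - sE > sE
    have h4 : 0 < Z i - M := by rw [← h3]; exact mul_pos hγ hβi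
    have h5 : s * E < s * M := by
      have hγdef' : γ = 1 - n * lam := hγdef
      linarith
    have := mul_lt_mul_of_pos_left hMltE hs0'
    linarith
  -- Claim B : on-support coordinates are positive
  have claimB : ∀ j ∈ S, βhat j ≠ 0 := by
    intro j hj
    by_contra hne
    set P : Finset (Fin n) := S.filter (fun k => 0 < βhat k) with hP
    have hPsub : P ⊆ S := Finset.filter_subset _ _
    have hjP : j ∉ P := by
      intro hc
      have := (Finset.mem_filter.1 hc).2
      rw [hne] at this; exact lt_irrefl 0 this
    have hsumP : ∑ k ∈ P, βhat k = 1 := by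
      rw [← hβhat.2]
      refine Finset.sum_subset (Finset.subset_univ P) (fun x _ hx => ?_)
      rcases lt_or_eq_of_le (hβhat.1 x) with h | h
      · exfalso
        apply hx
        rw [hP, Finset.mem_filter]
        refine ⟨?_, h⟩
        by_contra hxS
        have := claimA x hxS
        rw [this] at h; exact lt_irrefl 0 h
      · exact h.symm
    have hPne : P.Nonempty := by
      by_contra h
      rw [Finset.not_nonempty_iff_eq_empty] at h
      rw [h] at hsumP
      simp at hsumP
    obtain ⟨k₀, hk₀⟩ := hPne
    have hk₀pos : 0 < βhat k₀ := (Finset.mem_filter.1 hk₀).2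
    set M : ℝ := Z k₀ - γ * βhat k₀ with hM
    have hMk : ∀ k ∈ P, Z k - γ * βhat k = M := fun k hk =>
      le_antisymm (kkt k₀ k hk₀pos) (kkt k k₀ (Finset.mem_filter.1 hk).2)
    have hMZj : Z j ≤ M := by
      have := kkt k₀ j hk₀pos
      rw [hne] at this; simpa using this
    have hMlb : n * lam / s + E < M := by
      have h2 : n * lam / s + E < Z j := by
        rw [hZk]
        have hb := hbmin j hj
        have := hE j
        cases abs_le.1 this
        linarith
      linarith
    -- γ = ∑_P (Z k - M) < ∑_P (βstar k - nλ/s)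
    have hγeq : γ = ∑ k ∈ P, (Z k - M) := by
      have h1 : ∀ k ∈ P, Z k - M = γ * βhat k := by
        intro k hk; have := hMk k hk; linarith
      rw [Finset.sum_congr rfl h1, ← Finset.mul_sum, hsumP, mul_one]
    have hγlt : γ < ∑ k ∈ P, (βstar k - n * lam / s) := by
      rw [hγeq]
      refine Finset.sum_lt_sum_of_nonempty ⟨k₀, hk₀⟩ (fun k hk => ?_)
      have h1 : Z k ≤ βstar k + E := by
        rw [hZk]
        have := hE k
        cases abs_le.1 this
        linarith
      linarith
    have hsplit : ∑ k ∈ P, (βstar k - n * lam / s)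
        = (1 - ∑ k ∈ S \ P, βstar k) - P.card * (n * lam / s) := by
      rw [Finset.sum_sub_distrib, Finset.sum_const, nsmul_eq_mul]
      have : ∑ k ∈ S \ P, βstar k + ∑ k ∈ P, βstar k = ∑ k ∈ S, βstar k :=
        Finset.sum_sdiff hPsub
      rw [hsumS] at this
      linarith
    have hTcard : (S \ P).card = s - P.card := by
      rw [Finset.card_sdiff_of_subset hPsub, hcard]
    have hTlb : ((S \ P).card : ℝ) * (n * lam / s + 2 * E) < ∑ k ∈ S \ P, βstar k := by
      have hTne : (S \ P).Nonempty := ⟨j, Finset.mem_sdiff.2 ⟨hj, hjP⟩⟩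
      have h1 : ∑ k ∈ S \ P, (n * lam / s + 2 * E) < ∑ k ∈ S \ P, βstar k :=
        Finset.sum_lt_sum_of_nonempty hTne
          (fun k hk => hbmin k (Finset.mem_sdiff.1 hk).1)
      rwa [Finset.sum_const, nsmul_eq_mul] at h1
    -- casts: card(S\P) + card(P) = s
    have hPle : P.card ≤ s := by rw [← hcard]; exact Finset.card_le_card hPsub
    have hcards : ((S \ P).card : ℝ) + (P.card : ℝ) = (s : ℝ) := by
      rw [hTcard]
      have := Nat.cast_sub hPle (R := ℝ)
      rw [this]; ring
    have hdiv : (s : ℝ) * (n * lam / s) = n * lam := by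
      field_simp
    have hT1 : (1 : ℝ) ≤ ((S \ P).card : ℝ) := by
      have : 0 < (S \ P).card := Finset.card_pos.2 ⟨j, Finset.mem_sdiff.2 ⟨hj, hjP⟩⟩
      exact_mod_cast this
    -- combine: γ < 1 - nλ - 2*(card T)*E ≤ 1 - nλ = γ
    have hfinal : γ < γ := by
      have hnls : 0 ≤ n * lam / s := by positivity
      nlinarith [mul_nonneg (sub_nonneg.2 hT1) hE0]
    exact lt_irrefl γ hfinal
  intro i
  constructor
  · intro h
    by_contra hiS
    exact h (claimA i hiS)
  · exact claimB i
end

section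
/- The Euclidean projection of x ∈ ℝ^n onto the simplex Δ^n is given coordinatewise by (Π_{Δ^n}(x))_i = max{x_i − τ, 0}, where, if x_{(1)} ≥ ... ≥ x_{(n)} are the sorted entries, τ = (1/q)(∑_{i=1}^q x_{(i)} − 1) with q = max{k : x_{(k)} > (1/k)(∑_{i=1}^k x_{(i)} − 1)}. -/
/-- Euclidean projection onto the simplex: with the entries of `x` sorted in
decreasing order via a permutation `σ` (`y = x ∘ σ`), `q − 1 = jq` the largest
index with `y_{jq} > (1/(jq+1))(∑_{i ≤ jq} y_i − 1)` and
`τ = (1/(jq+1))(∑_{i ≤ jq} y_i − 1)`, the projection of `x` onto `Δ^n` is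
given coordinatewise by `max{x_i − τ, 0}`. -/
theorem stmt_11 (n : ℕ) (hn : 0 < n) (x : Fin n → ℝ)
    (σ : Equiv.Perm (Fin n)) (hsort : Antitone (x ∘ σ))
    (jq : Fin n)
    (hjq : x (σ jq) > (1 / ((jq : ℕ) + 1)) * ((∑ i ∈ Finset.Iic jq, x (σ i)) - 1))
    (hjqmax : ∀ j : Fin n,
      x (σ j) > (1 / ((j : ℕ) + 1)) * ((∑ i ∈ Finset.Iic j, x (σ i)) - 1) → j ≤ jq)
    (τ : ℝ) (hτ : τ = (1 / ((jq : ℕ) + 1)) * ((∑ i ∈ Finset.Iic jq, x (σ i)) - 1))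
    (βhat : Fin n → ℝ) (hβhat : βhat ∈ stdSimplex ℝ (Fin n))
    (hmin : ∀ β ∈ stdSimplex ℝ (Fin n),
      ∑ i, (x i - βhat i) ^ 2 ≤ ∑ i, (x i - β i) ^ 2) :
    ∀ i, βhat i = max (x i - τ) 0 := by
  set b : Fin n → ℝ := fun i => max (x i - τ) 0 with hb_def
  have hcast : (((jq : ℕ) : ℝ) + 1) ≠ 0 := by positivity
  have hτ' : (((jq : ℕ) : ℝ) + 1) * τ = (∑ i ∈ Finset.Iic jq, x (σ i)) - 1 := by
    rw [hτ]; field_simp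
  have hytau : τ < x (σ jq) := by rw [hτ]; exact hjq
  have hle : ∀ j : Fin n, j ≤ jq → τ < x (σ j) := fun j hj =>
    lt_of_lt_of_le hytau (hsort hj)
  have hgt : ∀ j : Fin n, jq < j → x (σ j) ≤ τ := by
    intro j hj
    have hjv : (jq : ℕ) < (j : ℕ) := hj
    have hj'lt : (jq : ℕ) + 1 < n := lt_of_le_of_lt hjv j.isLt
    set j' : Fin n := ⟨(jq : ℕ) + 1, hj'lt⟩ with hj'_def
    have hle' : x (σ j) ≤ x (σ j') := hsort (by simp [Fin.le_def, hj'_def]; omega)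
    have hnot : ¬ (x (σ j') > (1 / ((j' : ℕ) + 1)) * ((∑ i ∈ Finset.Iic j', x (σ i)) - 1)) := by
      intro h
      have := hjqmax j' h
      rw [Fin.le_def] at this
      simp [hj'_def] at this
    push_neg at hnot
    have hIic : Finset.Iic j' = insert j' (Finset.Iic jq) := by
      ext i
      simp only [Finset.mem_Iic, Finset.mem_insert, Fin.le_def, Fin.ext_iff, hj'_def]
      omega
    have hnotmem : j' ∉ Finset.Iic jq := by
      simp [Finset.mem_Iic, Fin.le_def, hj'_def]
    rw [hIic, Finset.sum_insert hnotmem] at hnot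
    have hval : ((j' : ℕ) : ℝ) = ((jq : ℕ) : ℝ) + 1 := by
      simp [hj'_def]
    rw [hval] at hnot
    have hpos : (0:ℝ) < ((jq : ℕ) : ℝ) + 1 + 1 := by positivity
    rw [div_mul_eq_mul_div, one_mul, le_div_iff₀ hpos] at hnot
    have : x (σ j') ≤ τ := by nlinarith [hnot, hτ']
    linarith
  have hbval1 : ∀ j : Fin n, j ≤ jq → b (σ j) = x (σ j) - τ := fun j hj =>
    max_eq_left (by linarith [hle j hj])
  have hbval0 : ∀ j : Fin n, jq < j → b (σ j) = 0 := fun j hj =>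
    max_eq_right (by linarith [hgt j hj])
  have hcard : (Finset.Iic jq).card = (jq : ℕ) + 1 := by
    simp [Fin.card_Iic]
  have hsum : ∑ i, b i = 1 := by
    rw [← Equiv.sum_comp σ b]
    rw [← Finset.sum_add_sum_compl (Finset.Iic jq)]
    have h1 : ∑ j ∈ Finset.Iic jq, b (σ j) = ∑ j ∈ Finset.Iic jq, (x (σ j) - τ) :=
      Finset.sum_congr rfl fun j hj => hbval1 j (Finset.mem_Iic.mp hj)
    have h2 : ∑ j ∈ (Finset.Iic jq)ᶜ, b (σ j) = 0 :=
      Finset.sum_eq_zero fun j hj => hbval0 j (by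
        simp only [Finset.mem_compl, Finset.mem_Iic] at hj
        exact lt_of_not_ge hj)
    rw [h1, h2, Finset.sum_sub_distrib, Finset.sum_const, hcard, add_zero,
      nsmul_eq_mul]
    push_cast
    linarith [hτ']
  have hb_mem : b ∈ stdSimplex ℝ (Fin n) := ⟨fun i => le_max_right _ _, hsum⟩
  have hdiff_le : ∀ i, x i - b i ≤ τ := fun i => by
    have := le_max_left (x i - τ) 0
    simp only [hb_def]
    linarith
  have hdiff_eq : ∀ i, (x i - b i) * b i = τ * b i := by
    intro i
    by_cases h : x i - τ ≤ 0
    · have : b i = 0 := max_eq_right h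
      rw [this]; ring
    · push_neg at h
      have : b i = x i - τ := max_eq_left (le_of_lt h)
      rw [this]; ring
  have hVI : ∑ i, (x i - b i) * (βhat i - b i) ≤ 0 := by
    have hsum' : ∑ i, (x i - b i) * (βhat i - b i)
        = (∑ i, (x i - b i) * βhat i) - τ := by
      simp_rw [mul_sub]
      rw [Finset.sum_sub_distrib]
      congr 1
      rw [Finset.sum_congr rfl fun i _ => hdiff_eq i, ← Finset.mul_sum, hsum, mul_one]
    have h1 : ∑ i, (x i - b i) * βhat i ≤ ∑ i, τ * βhat i :=
      Finset.sum_le_sum fun i _ => mul_le_mul_of_nonneg_right (hdiff_le i) (hβhat.1 i)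
    have h2 : ∑ i, τ * βhat i = τ := by rw [← Finset.mul_sum, hβhat.2, mul_one]
    rw [hsum']
    linarith
  have hkey := hmin b hb_mem
  have hexp : ∑ i, (x i - βhat i) ^ 2
      = ∑ i, ((x i - b i) ^ 2 - 2 * ((x i - b i) * (βhat i - b i)) + (βhat i - b i) ^ 2) :=
    Finset.sum_congr rfl fun i _ => by ring
  rw [Finset.sum_add_distrib, Finset.sum_sub_distrib, ← Finset.mul_sum] at hexp
  have hz : ∑ i, (βhat i - b i) ^ 2 ≤ 0 := by linarith
  have hz' : ∑ i, (βhat i - b i) ^ 2 = 0 :=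
    le_antisymm hz (Finset.sum_nonneg fun i _ => sq_nonneg _)
  have hall := (Finset.sum_eq_zero_iff_of_nonneg fun i _ => sq_nonneg (βhat i - b i)).mp hz'
  intro i
  have hi := hall i (Finset.mem_univ i)
  have : βhat i - b i = 0 := by
    have := sq_eq_zero_iff.mp hi
    exact this
  have hb : b i = max (x i - τ) 0 := rfl
  linarith [hb ▸ this]
end

section
/- Let R_n : ℝ^p → ℝ be continuous, λ ≥ 0, f(β) = R_n(β) − λ‖β‖₂², and let the CCCP iteration on the compact set Δ^p be β^{k+1} ∈ argmin_{β∈Δ^p} R_n(β) − 2λ⟨β^k, β − β^k⟩. If a subsequence of {β^k} converges to β̄ ∈ Δ^p and f(β^k) is nonincreasing with limit f̄ = f(β̄), then β̄ minimizes β ↦ R_n(β) − 2λ⟨β̄, β − β̄⟩ over Δ^p; in particular, if R_n is differentiable, −∇R_n(β̄) + 2λβ̄ lies in the normal cone of Δ^p at β̄. -/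
open Filter Topology

set_option maxHeartbeats 1000000

/-- Convergence of the CCCP iteration for `f(β) = R_n(β) − λ‖β‖₂²` on `Δ^p`:
a subsequential limit `β̄` with `f(β^k)` nonincreasing and converging to `f(β̄)`
minimizes the linearized objective `β ↦ R_n(β) − 2λ⟨β̄, β − β̄⟩` over `Δ^p`; in
particular, if `R_n` is differentiable, `−∇R_n(β̄) + 2λβ̄` lies in the normal
cone of `Δ^p` at `β̄`. -/
theorem stmt_13 (p : ℕ) (Rn : (Fin p → ℝ) → ℝ) (hcont : Continuous Rn)
    (lam : ℝ) (hlam : 0 ≤ lam)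
    (f : (Fin p → ℝ) → ℝ)
    (hf : ∀ β, f β = Rn β - lam * ∑ j, (β j) ^ 2)
    (β : ℕ → (Fin p → ℝ)) (hβ : ∀ k, β k ∈ stdSimplex ℝ (Fin p))
    (hiter : ∀ k, ∀ b ∈ stdSimplex ℝ (Fin p),
      Rn (β (k + 1)) - 2 * lam * (∑ j, β k j * (β (k + 1) j - β k j)) ≤
        Rn b - 2 * lam * (∑ j, β k j * (b j - β k j)))
    (βbar : Fin p → ℝ) (hβbar : βbar ∈ stdSimplex ℝ (Fin p))
    (φ : ℕ → ℕ) (hφ : StrictMono φ)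
    (hconv : Filter.Tendsto (fun i => β (φ i)) Filter.atTop (nhds βbar))
    (hdec : Antitone (fun k => f (β k)))
    (hflim : Filter.Tendsto (fun k => f (β k)) Filter.atTop (nhds (f βbar))) :
    (∀ b ∈ stdSimplex ℝ (Fin p),
      Rn βbar ≤ Rn b - 2 * lam * (∑ j, βbar j * (b j - βbar j))) ∧
    (Differentiable ℝ Rn → ∀ b ∈ stdSimplex ℝ (Fin p),
      -(fderiv ℝ Rn βbar (b - βbar)) + 2 * lam * (∑ j, βbar j * (b j - βbar j)) ≤ 0) := by
  have key : ∀ k, ∀ b ∈ stdSimplex ℝ (Fin p),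
      f (β (k+1)) ≤ Rn b - 2 * lam * (∑ j, β k j * (b j - β k j))
        - lam * ∑ j, (β k j)^2 := by
    intro k b hb
    have h1 := hiter k b hb
    have h2 : f (β (k+1)) ≤ Rn (β (k+1))
        - 2 * lam * (∑ j, β k j * (β (k+1) j - β k j)) - lam * ∑ j, (β k j)^2 := by
      rw [hf]
      have hsq : 0 ≤ lam * ∑ j, (β (k+1) j - β k j)^2 :=
        mul_nonneg hlam (Finset.sum_nonneg fun j _ => sq_nonneg _)
      have expand : (∑ j, (β (k+1) j - β k j)^2)
          = (∑ j, (β (k+1) j)^2) - 2*(∑ j, β k j * (β (k+1) j - β k j))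
            - (∑ j, (β k j)^2) := by
        rw [Finset.mul_sum, ← Finset.sum_sub_distrib, ← Finset.sum_sub_distrib]
        congr 1; funext j; ring
      rw [expand] at hsq
      nlinarith [hsq]
    linarith
  have part1 : ∀ b ∈ stdSimplex ℝ (Fin p),
      Rn βbar ≤ Rn b - 2 * lam * (∑ j, βbar j * (b j - βbar j)) := by
    intro b hb
    have hL : Tendsto (fun i => f (β (φ i + 1))) atTop (𝓝 (f βbar)) :=
      hflim.comp (tendsto_atTop_mono (fun i => Nat.le_succ (φ i)) hφ.tendsto_atTop)
    have hcontG : Continuous (fun x : Fin p → ℝ =>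
        Rn b - 2 * lam * (∑ j, x j * (b j - x j)) - lam * ∑ j, (x j)^2) := by
      apply Continuous.sub
      · apply Continuous.sub continuous_const
        exact continuous_const.mul (continuous_finset_sum _ fun j _ =>
          (continuous_apply j).mul (continuous_const.sub (continuous_apply j)))
      · exact continuous_const.mul (continuous_finset_sum _ fun j _ =>
          (continuous_apply j).pow 2)
    have hR : Tendsto (fun i => Rn b - 2 * lam * (∑ j, β (φ i) j * (b j - β (φ i) j))
          - lam * ∑ j, (β (φ i) j)^2) atTop
        (𝓝 (Rn b - 2 * lam * (∑ j, βbar j * (b j - βbar j))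
          - lam * ∑ j, (βbar j)^2)) :=
      (hcontG.tendsto βbar).comp hconv
    have hle := le_of_tendsto_of_tendsto' hL hR (fun i => key (φ i) b hb)
    rw [hf] at hle
    linarith
  refine ⟨part1, ?_⟩
  intro hdiff b hb
  set d : Fin p → ℝ := b - βbar with hd
  set c : ℝ := 2 * lam * (∑ j, βbar j * (b j - βbar j)) with hc
  have hder : HasDerivAt (fun t : ℝ => Rn (βbar + t • d)) (fderiv ℝ Rn βbar d) 0 := by
    have h1 : HasDerivAt (fun t : ℝ => βbar + t • d) d 0 := by
      simpa using ((hasDerivAt_id (0:ℝ)).smul_const d).const_add βbar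
    have h2 : HasFDerivAt Rn (fderiv ℝ Rn βbar) (βbar + (0:ℝ) • d) := by
      simpa using (hdiff βbar).hasFDerivAt
    have h3 := h2.comp_hasDerivAt (x := (0:ℝ)) h1
    exact h3
  have hmono := (hasDerivAt_iff_tendsto_slope.mp hder).mono_left
      (nhdsWithin_mono 0 (fun t (ht : t ∈ Set.Ioi (0:ℝ)) => ne_of_gt ht))
  have hbd : ∀ᶠ t in 𝓝[>] (0:ℝ),
      c ≤ slope (fun t : ℝ => Rn (βbar + t • d)) 0 t := by
    filter_upwards [Ioc_mem_nhdsGT_of_mem (by norm_num : (0:ℝ) ∈ Set.Ico 0 1)] with t ht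
    have hmem : βbar + t • d ∈ stdSimplex ℝ (Fin p) := by
      have hcvx := (convex_stdSimplex ℝ (Fin p)) hβbar hb
        (by linarith [ht.2] : (0:ℝ) ≤ 1 - t) (le_of_lt ht.1) (by ring)
      convert hcvx using 1
      funext j
      simp [hd, Pi.sub_apply]
      ring
    have h1 := part1 _ hmem
    have hsum : (∑ j, βbar j * ((βbar + t • d) j - βbar j))
        = t * ∑ j, βbar j * (b j - βbar j) := by
      rw [Finset.mul_sum]
      congr 1; funext j
      simp [hd, Pi.sub_apply]
      ring
    rw [hsum] at h1
    have hz : (βbar + (0:ℝ) • d) = βbar := by funext j; simp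
    rw [slope_def_field, sub_zero, hz, le_div_iff₀ ht.1]
    have h2 : c * t = 2 * lam * (t * ∑ j, βbar j * (b j - βbar j)) := by
      rw [hc]; ring
    linarith
  have hfin := ge_of_tendsto hmono hbd
  linarith
end

section
/- Let B* ∈ ℍ^m with B* ⪰ 0, tr(B*) = 1, rank(B*) ≤ r, and let B ∈ ℍ^m with B ⪰ 0, tr(B) = 1. Let 𝕋 = 𝕋(B*) be the tangent space at B* and Φ = B − B*. Then tr(Π_{𝕋^⊥}Φ) = −tr(Π_{𝕋}Φ) and Π_{𝕋^⊥}Φ ⪰ 0; moreover ‖Π_{𝕋^⊥}Φ‖₁ ≤ ‖Π_{𝕋}Φ‖₁ and ‖Φ‖₁ ≤ 2√(2r)‖Φ‖₂. -/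
open Matrix ComplexOrder

/-- Squared Frobenius norm of a complex matrix. -/
noncomputable def frobSq {m : ℕ} (A : Matrix (Fin m) (Fin m) ℂ) : ℝ :=
  ∑ i, ∑ j, ‖A i j‖ ^ 2

/-- Nuclear (Schatten-1) norm: sum of the singular values. -/
noncomputable def nuclearNorm {m : ℕ} (A : Matrix (Fin m) (Fin m) ℂ) : ℝ :=
  ∑ i, Real.sqrt ((Matrix.posSemidef_conjTranspose_mul_self A).1.eigenvalues i)

lemma trace_unit_diag {m : ℕ} (V : Matrix.unitaryGroup (Fin m) ℂ) (f : Fin m → ℂ) :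
    ((V : Matrix (Fin m) (Fin m) ℂ) * Matrix.diagonal f *
      (star V : Matrix (Fin m) (Fin m) ℂ)).trace = ∑ i, f i := by
  rw [Matrix.trace_mul_cycle, Matrix.UnitaryGroup.star_mul_self, Matrix.one_mul,
    Matrix.trace_diagonal]

lemma unit_diag_mul {m : ℕ} (V : Matrix.unitaryGroup (Fin m) ℂ) (f g : Fin m → ℂ) :
    ((V : Matrix (Fin m) (Fin m) ℂ) * Matrix.diagonal f * (star V : Matrix (Fin m) (Fin m) ℂ)) *
      ((V : Matrix (Fin m) (Fin m) ℂ) * Matrix.diagonal g * (star V : Matrix (Fin m) (Fin m) ℂ))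
    = (V : Matrix (Fin m) (Fin m) ℂ) * Matrix.diagonal (fun i => f i * g i) *
      (star V : Matrix (Fin m) (Fin m) ℂ) := by
  have h1 : (star V : Matrix (Fin m) (Fin m) ℂ) * (V : Matrix (Fin m) (Fin m) ℂ) = 1 :=
    Matrix.UnitaryGroup.star_mul_self V
  calc ((V : Matrix (Fin m) (Fin m) ℂ) * Matrix.diagonal f * (star V : Matrix (Fin m) (Fin m) ℂ)) *
      ((V : Matrix (Fin m) (Fin m) ℂ) * Matrix.diagonal g * (star V : Matrix (Fin m) (Fin m) ℂ))
      = (V : Matrix (Fin m) (Fin m) ℂ) * (Matrix.diagonal f *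
        (((star V : Matrix (Fin m) (Fin m) ℂ)) * (V : Matrix (Fin m) (Fin m) ℂ)) *
        Matrix.diagonal g) * (star V : Matrix (Fin m) (Fin m) ℂ) := by
        simp only [Matrix.mul_assoc]
    _ = _ := by rw [h1, Matrix.mul_one, Matrix.diagonal_mul_diagonal]

lemma herm_trace {m : ℕ} {A : Matrix (Fin m) (Fin m) ℂ} (hA : A.IsHermitian) :
    A.trace = ∑ i, (hA.eigenvalues i : ℂ) := by
  conv_lhs => rw [hA.spectral_theorem]
  simpa using trace_unit_diag hA.eigenvectorUnitary (RCLike.ofReal ∘ hA.eigenvalues)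

lemma sqrt_trace {m : ℕ} {A : Matrix (Fin m) (Fin m) ℂ} (hA : A.PosSemidef) :
    (cfc Real.sqrt A).trace = ∑ i, (Real.sqrt (hA.1.eigenvalues i) : ℂ) := by
  rw [Matrix.IsHermitian.cfc_eq hA.1, Matrix.IsHermitian.cfc, Unitary.conjStarAlgAut_apply]
  exact trace_unit_diag hA.1.eigenvectorUnitary _

lemma herm_nuclear {m : ℕ} {A : Matrix (Fin m) (Fin m) ℂ} (hA : A.IsHermitian) :
    nuclearNorm A = ∑ i, |hA.eigenvalues i| := by
  set P := Matrix.posSemidef_conjTranspose_mul_self A with hP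
  set V := hA.eigenvectorUnitary with hV
  set S : Matrix (Fin m) (Fin m) ℂ :=
    (V : Matrix (Fin m) (Fin m) ℂ) * Matrix.diagonal (fun i => ((|hA.eigenvalues i| : ℝ) : ℂ)) *
      (star V : Matrix (Fin m) (Fin m) ℂ) with hS
  have hSpsd : S.PosSemidef := by
    have hd : (Matrix.diagonal (fun i => ((|hA.eigenvalues i| : ℝ) : ℂ))).PosSemidef := by
      refine Matrix.posSemidef_diagonal_iff.mpr fun i => ?_
      rw [Complex.le_def]
      simp [abs_nonneg]
    simpa [hS, Matrix.star_eq_conjTranspose] using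
      hd.mul_mul_conjTranspose_same (V : Matrix (Fin m) (Fin m) ℂ)
  have hsq : S ^ 2 = Aᴴ * A := by
    have hAA : Aᴴ * A = A * A := by rw [hA.eq]
    rw [hAA, pow_two, hS, unit_diag_mul]
    conv_rhs => rw [hA.spectral_theorem]
    simp only [Unitary.conjStarAlgAut_apply]
    rw [unit_diag_mul]
    have heq : (fun i => ((|hA.eigenvalues i| : ℝ) : ℂ) * ((|hA.eigenvalues i| : ℝ) : ℂ))
        = fun i => ((RCLike.ofReal ∘ hA.eigenvalues) i * (RCLike.ofReal ∘ hA.eigenvalues) i) := by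
      funext i
      simp only [Function.comp_apply]
      norm_cast
      exact congrArg _ (abs_mul_abs_self (hA.eigenvalues i))
    rw [heq]
  have hSeq : S = cfc Real.sqrt (Aᴴ * A) := by
    have hsa : IsSelfAdjoint A := hA
    have hAA : Aᴴ * A = A ^ 2 := by rw [hA.eq, pow_two]
    rw [hAA, ← cfc_pow_id (R := ℝ) A 2 hsa, ← cfc_comp Real.sqrt (fun x : ℝ => x ^ 2) A hsa]
    have hfun : (Real.sqrt ∘ fun x : ℝ => x ^ 2) = fun x => |x| := by
      funext x; simp [Real.sqrt_sq_eq_abs]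
    rw [hfun, Matrix.IsHermitian.cfc_eq hA, Matrix.IsHermitian.cfc, Unitary.conjStarAlgAut_apply, hS]
    rfl
  have h1 : S.trace = ∑ i, ((|hA.eigenvalues i| : ℝ) : ℂ) := trace_unit_diag _ _
  have h2 : S.trace = ∑ i, (Real.sqrt (P.1.eigenvalues i) : ℂ) := by
    rw [hSeq]; exact sqrt_trace P
  have h3 : ((∑ i, Real.sqrt (P.1.eigenvalues i) : ℝ) : ℂ)
      = ((∑ i, |hA.eigenvalues i| : ℝ) : ℂ) := by
    push_cast
    rw [← h2, h1]
  have := Complex.ofReal_injective h3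
  simpa [nuclearNorm] using this

lemma orth_dot {m : ℕ} {Φ : Matrix (Fin m) (Fin m) ℂ} (hΦh : Φ.IsHermitian) (j k : Fin m) :
    dotProduct (star ⇑(hΦh.eigenvectorBasis j)) ⇑(hΦh.eigenvectorBasis k)
      = if j = k then 1 else 0 := by
  have := orthonormal_iff_ite.mp hΦh.eigenvectorBasis.orthonormal j k
  rw [EuclideanSpace.inner_eq_star_dotProduct, dotProduct_comm] at this
  exact this

lemma card_neg_le {m r : ℕ} {Bstar : Matrix (Fin m) (Fin m) ℂ}
    {U : Matrix (Fin m) (Fin r) ℂ} {d : Fin r → ℝ}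
    (hdec : Bstar = U * Matrix.diagonal (fun i => (d i : ℂ)) * Uᴴ)
    {B : Matrix (Fin m) (Fin m) ℂ} (hB : B.PosSemidef)
    {Φ : Matrix (Fin m) (Fin m) ℂ} (hΦ : Φ = B - Bstar) (hΦh : Φ.IsHermitian) :
    Fintype.card {i : Fin m // hΦh.eigenvalues i < 0} ≤ r := by
  classical
  set μ := hΦh.eigenvalues with hμ
  set w : Fin m → (Fin m → ℂ) := fun j => ⇑(hΦh.eigenvectorBasis j) with hw
  set W : Matrix (Fin m) {i : Fin m // μ i < 0} ℂ := Matrix.of (fun i j => w j i) with hW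
  have hinj : Function.Injective (Uᴴ * W).mulVecLin := by
    rw [injective_iff_map_eq_zero]
    intro c hc
    have hc' : (Uᴴ * W) *ᵥ c = 0 := hc
    set x : Fin m → ℂ := W *ᵥ c with hx
    have hUx : Uᴴ *ᵥ x = 0 := by rw [hx, Matrix.mulVec_mulVec]; exact hc'
    have hBsx : Bstar *ᵥ x = 0 := by
      rw [hdec, ← Matrix.mulVec_mulVec, ← Matrix.mulVec_mulVec, hUx, Matrix.mulVec_zero,
        Matrix.mulVec_zero]
    have h0 : 0 ≤ dotProduct (star x) (Φ *ᵥ x) := by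
      rw [hΦ, Matrix.sub_mulVec, dotProduct_sub, hBsx, dotProduct_zero, sub_zero]
      exact hB.dotProduct_mulVec_nonneg x
    have hx1 : ∀ i, x i = ∑ j : {i : Fin m // μ i < 0}, c j * w j i := by
      intro i
      simp [hx, hW, Matrix.mulVec, dotProduct, mul_comm]
    have hx2 : ∀ i, (Φ *ᵥ x) i = ∑ j : {i : Fin m // μ i < 0}, c j * ((μ j : ℂ) * w j i) := by
      intro i
      have hm : ∀ j : Fin m, (Φ *ᵥ w j) i = (μ j : ℂ) * w j i := by
        intro j
        rw [hw]
        simp only []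
        rw [hΦh.mulVec_eigenvectorBasis]
        simp [Complex.real_smul, hμ]
      calc (Φ *ᵥ x) i = ∑ k, Φ i k * ∑ j : {i : Fin m // μ i < 0}, c j * w j k := by
            simp only [Matrix.mulVec, dotProduct]
            exact Finset.sum_congr rfl fun k _ => by rw [hx1]
        _ = ∑ k, ∑ j : {i : Fin m // μ i < 0}, c j * (Φ i k * w j k) := by
            refine Finset.sum_congr rfl fun k _ => ?_
            rw [Finset.mul_sum]
            exact Finset.sum_congr rfl fun j _ => by ring
        _ = ∑ j : {i : Fin m // μ i < 0}, ∑ k, c j * (Φ i k * w j k) := Finset.sum_comm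
        _ = ∑ j : {i : Fin m // μ i < 0}, c j * (Φ *ᵥ w j) i := by
            exact Finset.sum_congr rfl fun j _ => by
              rw [← Finset.mul_sum]; rfl
        _ = _ := Finset.sum_congr rfl fun j _ => by rw [hm]
    have hval : dotProduct (star x) (Φ *ᵥ x)
        = ((∑ j : {i : Fin m // μ i < 0}, ‖c j‖ ^ 2 * μ j : ℝ) : ℂ) := by
      push_cast
      calc dotProduct (star x) (Φ *ᵥ x)
          = ∑ i, (∑ j : {i : Fin m // μ i < 0}, star (c j) * star (w j i)) *
              (∑ k : {i : Fin m // μ i < 0}, c k * ((μ k : ℂ) * w k i)) := by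
            refine Finset.sum_congr rfl fun i _ => ?_
            rw [Pi.star_apply, hx1, hx2, star_sum]
            congr 1
            exact Finset.sum_congr rfl fun j _ => by rw [star_mul']
        _ = ∑ i, ∑ j : {i : Fin m // μ i < 0}, ∑ k : {i : Fin m // μ i < 0},
              (star (c j) * (c k * (μ k : ℂ))) * (star (w j i) * w k i) := by
            refine Finset.sum_congr rfl fun i _ => ?_
            rw [Finset.sum_mul_sum]
            exact Finset.sum_congr rfl fun j _ => Finset.sum_congr rfl fun k _ => by ring
        _ = ∑ j : {i : Fin m // μ i < 0}, ∑ k : {i : Fin m // μ i < 0},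
              (star (c j) * (c k * (μ k : ℂ))) * ∑ i, star (w j i) * w k i := by
            rw [Finset.sum_comm]
            refine Finset.sum_congr rfl fun j _ => ?_
            rw [Finset.sum_comm]
            exact Finset.sum_congr rfl fun k _ => by rw [Finset.mul_sum]
        _ = ∑ j : {i : Fin m // μ i < 0}, ∑ k : {i : Fin m // μ i < 0},
              (star (c j) * (c k * (μ k : ℂ))) * (if (j : Fin m) = (k : Fin m) then 1 else 0) := by
            refine Finset.sum_congr rfl fun j _ => Finset.sum_congr rfl fun k _ => ?_
            congr 1
            exact orth_dot hΦh j k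
        _ = ∑ j : {i : Fin m // μ i < 0}, star (c j) * (c j * (μ j : ℂ)) := by
            refine Finset.sum_congr rfl fun j _ => ?_
            rw [Finset.sum_eq_single j]
            · simp
            · intro k _ hk
              simp [(Subtype.coe_injective.ne_iff).mpr hk.symm]
            · intro h; exact absurd (Finset.mem_univ j) h
        _ = ∑ j : {i : Fin m // μ i < 0}, (‖c j‖ : ℂ) ^ 2 * (μ j : ℂ) := by
            refine Finset.sum_congr rfl fun j _ => ?_
            rw [← mul_assoc, Complex.star_def, RCLike.conj_mul]
            push_cast
            rfl
    -- now conclude c = 0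
    rw [hval] at h0
    have h0' : (0 : ℝ) ≤ ∑ j : {i : Fin m // μ i < 0}, ‖c j‖ ^ 2 * μ j := by
      rwa [Complex.zero_le_real] at h0
    have hle : ∑ j : {i : Fin m // μ i < 0}, ‖c j‖ ^ 2 * μ j ≤ 0 :=
      Finset.sum_nonpos fun j _ => mul_nonpos_of_nonneg_of_nonpos (by positivity) j.2.le
    have hz := le_antisymm hle h0'
    funext j
    have := (Finset.sum_eq_zero_iff_of_nonpos
      (fun j _ => mul_nonpos_of_nonneg_of_nonpos (by positivity) (j.2.le))).mp hz j
      (Finset.mem_univ j)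
    have hcj : ‖c j‖ ^ 2 * μ j = 0 := this
    have : ‖c j‖ ^ 2 = 0 := by
      rcases mul_eq_zero.mp hcj with h | h
      · exact h
      · exact absurd h j.2.ne
    simpa using pow_eq_zero_iff (n := 2) (by norm_num) |>.mp this
  calc Fintype.card {i : Fin m // μ i < 0}
      = Module.finrank ℂ ({i : Fin m // μ i < 0} → ℂ) := (Module.finrank_pi ℂ).symm
    _ ≤ Module.finrank ℂ (Fin r → ℂ) := LinearMap.finrank_le_finrank_of_injective hinj
    _ = r := by simp

lemma herm_frobSq {m : ℕ} {A : Matrix (Fin m) (Fin m) ℂ} (hA : A.IsHermitian) :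
    frobSq A = ∑ i, hA.eigenvalues i ^ 2 := by
  have h1 : (Aᴴ * A).trace = ((frobSq A : ℝ) : ℂ) := by
    calc (Aᴴ * A).trace = ∑ i, ∑ j, star (A j i) * A j i := by
          simp [Matrix.trace, Matrix.mul_apply, Matrix.conjTranspose_apply, Matrix.diag]
      _ = ∑ i, ∑ j, ((‖A j i‖ : ℂ)) ^ 2 := by
          refine Finset.sum_congr rfl fun i _ => Finset.sum_congr rfl fun j _ => ?_
          rw [Complex.star_def, RCLike.conj_mul]
          rfl
      _ = ∑ j, ∑ i, ((‖A j i‖ : ℂ)) ^ 2 := Finset.sum_comm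
      _ = ((frobSq A : ℝ) : ℂ) := by rw [frobSq]; push_cast; rfl
  have h2 : (Aᴴ * A).trace = ((∑ i, hA.eigenvalues i ^ 2 : ℝ) : ℂ) := by
    have hAA : Aᴴ * A = A * A := by rw [hA.eq]
    rw [hAA]
    conv_lhs => rw [hA.spectral_theorem]
    simp only [Unitary.conjStarAlgAut_apply]
    rw [unit_diag_mul, trace_unit_diag]
    push_cast
    refine Finset.sum_congr rfl fun i _ => ?_
    simp only [Function.comp_apply]
    norm_cast
    exact congrArg _ (sq (hA.eigenvalues i)).symm
  exact Complex.ofReal_injective (h1.symm.trans h2)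

/-- Let `B* ⪰ 0`, `tr(B*) = 1`, `rank(B*) ≤ r`, with eigendecomposition
`B* = U Λ Uᴴ` (`U ∈ ℂ^{m×r}` with orthonormal columns, `Λ` real diagonal), and
let `B ⪰ 0`, `tr(B) = 1`. With `P = U Uᴴ`, `Q = 1 − P`, the projections onto
the tangent space `𝕋 = 𝕋(B*)` and its orthocomplement are
`Π_𝕋 Φ = Φ − QΦQ` and `Π_{𝕋^⊥} Φ = QΦQ`. Then for `Φ = B − B*`:
`tr(Π_{𝕋^⊥}Φ) = −tr(Π_𝕋 Φ)`, `Π_{𝕋^⊥}Φ ⪰ 0`,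
`‖Π_{𝕋^⊥}Φ‖₁ ≤ ‖Π_𝕋 Φ‖₁`, and `‖Φ‖₁ ≤ 2√(2r)‖Φ‖₂`. -/
theorem stmt_15 (m r : ℕ)
    (Bstar : Matrix (Fin m) (Fin m) ℂ)
    (hB1 : Bstar.PosSemidef) (hB2 : Bstar.trace = 1) (hB3 : Bstar.rank ≤ r)
    (U : Matrix (Fin m) (Fin r) ℂ) (hU : Uᴴ * U = 1)
    (d : Fin r → ℝ)
    (hdec : Bstar = U * Matrix.diagonal (fun i => (d i : ℂ)) * Uᴴ)
    (B : Matrix (Fin m) (Fin m) ℂ) (hB : B.PosSemidef) (hBtr : B.trace = 1)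
    (Φ : Matrix (Fin m) (Fin m) ℂ) (hΦ : Φ = B - Bstar)
    (Q : Matrix (Fin m) (Fin m) ℂ) (hQ : Q = 1 - U * Uᴴ) :
    (Q * Φ * Q).trace = -((Φ - Q * Φ * Q).trace) ∧
    (Q * Φ * Q).PosSemidef ∧
    nuclearNorm (Q * Φ * Q) ≤ nuclearNorm (Φ - Q * Φ * Q) ∧
    nuclearNorm Φ ≤ 2 * Real.sqrt (2 * r) * Real.sqrt (frobSq Φ) := by
  classical
  have hΦh : Φ.IsHermitian := by rw [hΦ]; exact hB.1.sub hB1.1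
  have hQh : Qᴴ = Q := by rw [hQ]; simp
  have hQBs : Q * Bstar = 0 := by
    rw [hQ, hdec, Matrix.sub_mul, Matrix.one_mul]
    have : U * Uᴴ * (U * Matrix.diagonal (fun i => (d i : ℂ)) * Uᴴ)
        = U * Matrix.diagonal (fun i => (d i : ℂ)) * Uᴴ := by
      calc U * Uᴴ * (U * Matrix.diagonal (fun i => (d i : ℂ)) * Uᴴ)
          = U * ((Uᴴ * U) * (Matrix.diagonal (fun i => (d i : ℂ)) * Uᴴ)) := by
            simp only [Matrix.mul_assoc]
        _ = _ := by rw [hU, Matrix.one_mul, Matrix.mul_assoc]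
    rw [this, sub_self]
  have hQΦQ : Q * Φ * Q = Q * B * Q := by
    rw [hΦ, Matrix.mul_sub, hQBs, Matrix.sub_mul, Matrix.zero_mul, sub_zero]
  have hpsd : (Q * Φ * Q).PosSemidef := by
    rw [hQΦQ]
    have := hB.mul_mul_conjTranspose_same Q
    rwa [hQh] at this
  have htr0 : Φ.trace = 0 := by rw [hΦ, Matrix.trace_sub, hBtr, hB2, sub_self]
  have h1 : (Q * Φ * Q).trace = -((Φ - Q * Φ * Q).trace) := by
    rw [Matrix.trace_sub, htr0, zero_sub, neg_neg]
  refine ⟨h1, hpsd, ?_, ?_⟩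
  · -- part 3
    have hTh : (Φ - Q * Φ * Q).IsHermitian := hΦh.sub hpsd.1
    have e1 : (∑ i, hpsd.1.eigenvalues i) = -∑ i, hTh.eigenvalues i := by
      apply Complex.ofReal_injective
      push_cast
      rw [← herm_trace hpsd.1, ← herm_trace hTh, h1]
    calc nuclearNorm (Q * Φ * Q) = ∑ i, |hpsd.1.eigenvalues i| := herm_nuclear hpsd.1
      _ = ∑ i, hpsd.1.eigenvalues i :=
          Finset.sum_congr rfl fun i _ => abs_of_nonneg (hpsd.eigenvalues_nonneg i)
      _ = ∑ i, -hTh.eigenvalues i := by rw [e1, ← Finset.sum_neg_distrib]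
      _ ≤ ∑ i, |hTh.eigenvalues i| := Finset.sum_le_sum fun i _ => neg_le_abs _
      _ = nuclearNorm (Φ - Q * Φ * Q) := (herm_nuclear hTh).symm
  · -- part 4
    set μ := hΦh.eigenvalues with hμdef
    have hμ0 : ∑ i, μ i = 0 := by
      apply Complex.ofReal_injective
      push_cast
      rw [← herm_trace hΦh, htr0]
    have hcard : Fintype.card {i : Fin m // μ i < 0} ≤ r := card_neg_le hdec hB hΦ hΦh
    set S := Finset.univ.filter (fun i => μ i < 0) with hSdef
    have hScard : S.card ≤ r := by
      rw [hSdef]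
      rw [← Fintype.card_subtype]
      exact hcard
    have hsum_split : ∑ i ∈ S, μ i + ∑ i ∈ Finset.univ.filter (fun i => ¬ μ i < 0), μ i = 0 := by
      rw [hSdef, Finset.sum_filter_add_sum_filter_not, hμ0]
    have habs : ∑ i, |μ i| = 2 * ∑ i ∈ S, (-μ i) := by
      have h2 : ∑ i ∈ S, |μ i| = ∑ i ∈ S, (-μ i) :=
        Finset.sum_congr rfl fun i hi => abs_of_neg (Finset.mem_filter.mp hi).2
      have h3 : ∑ i ∈ Finset.univ.filter (fun i => ¬ μ i < 0), |μ i|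
          = ∑ i ∈ Finset.univ.filter (fun i => ¬ μ i < 0), μ i :=
        Finset.sum_congr rfl fun i hi =>
          abs_of_nonneg (not_lt.mp (Finset.mem_filter.mp hi).2)
      have h4 : ∑ i ∈ Finset.univ.filter (fun i => ¬ μ i < 0), μ i = ∑ i ∈ S, (-μ i) := by
        have := hsum_split
        rw [Finset.sum_neg_distrib]
        linarith
      calc ∑ i, |μ i| = ∑ i ∈ S, |μ i|
            + ∑ i ∈ Finset.univ.filter (fun i => ¬ μ i < 0), |μ i| := by
            rw [hSdef, Finset.sum_filter_add_sum_filter_not]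
        _ = ∑ i ∈ S, (-μ i) + ∑ i ∈ S, (-μ i) := by rw [h2, h3, h4]
        _ = 2 * ∑ i ∈ S, (-μ i) := by ring
    have hfrob : frobSq Φ = ∑ i, μ i ^ 2 := herm_frobSq hΦh
    have hfrob_nonneg : 0 ≤ frobSq Φ := by
      rw [hfrob]; exact Finset.sum_nonneg fun i _ => sq_nonneg _
    have hcs : (∑ i ∈ S, (-μ i)) ^ 2 ≤ (2 * r) * frobSq Φ := by
      have h5 : (∑ i ∈ S, (-μ i)) ^ 2 ≤ (S.card : ℝ) * ∑ i ∈ S, (-μ i) ^ 2 :=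
        sq_sum_le_card_mul_sum_sq
      have h6 : ∑ i ∈ S, (-μ i) ^ 2 ≤ frobSq Φ := by
        rw [hfrob]
        calc ∑ i ∈ S, (-μ i) ^ 2 = ∑ i ∈ S, μ i ^ 2 := by simp
          _ ≤ ∑ i, μ i ^ 2 :=
              Finset.sum_le_sum_of_subset_of_nonneg (Finset.subset_univ S)
                (fun i _ _ => sq_nonneg _)
      calc (∑ i ∈ S, (-μ i)) ^ 2 ≤ (S.card : ℝ) * ∑ i ∈ S, (-μ i) ^ 2 := h5
        _ ≤ (r : ℝ) * frobSq Φ := by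
            apply mul_le_mul (by exact_mod_cast hScard) h6
              (Finset.sum_nonneg fun i _ => sq_nonneg _) (Nat.cast_nonneg r)
        _ ≤ (2 * r) * frobSq Φ := by nlinarith [hfrob_nonneg, Nat.cast_nonneg (α := ℝ) r]
    have hSnonneg : 0 ≤ ∑ i ∈ S, (-μ i) :=
      Finset.sum_nonneg fun i hi => neg_nonneg.mpr (Finset.mem_filter.mp hi).2.le
    have hkey : ∑ i ∈ S, (-μ i) ≤ Real.sqrt (2 * r) * Real.sqrt (frobSq Φ) := by
      rw [← Real.sqrt_mul (by positivity)]
      calc ∑ i ∈ S, (-μ i) = Real.sqrt ((∑ i ∈ S, (-μ i)) ^ 2) := by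
            rw [Real.sqrt_sq hSnonneg]
        _ ≤ Real.sqrt ((2 * r) * frobSq Φ) := Real.sqrt_le_sqrt hcs
    calc nuclearNorm Φ = ∑ i, |μ i| := herm_nuclear hΦh
      _ = 2 * ∑ i ∈ S, (-μ i) := habs
      _ ≤ 2 * (Real.sqrt (2 * r) * Real.sqrt (frobSq Φ)) := by linarith
      _ = 2 * Real.sqrt (2 * r) * Real.sqrt (frobSq Φ) := by ring
end

section
/- Let Υ ∈ ℍ^m be Hermitian, 0 ≤ λ < 1/n, and γ = 1 − nλ. Then the minimizer of B ↦ (1/n)‖Υ − B‖₂² − λ‖B‖₂² over {B ⪰ 0, tr(B) = 1} equals the Frobenius projection of Υ/γ onto that set; moreover, if Υ = U diag(υ) U^H is an eigendecomposition, the minimizer equals U diag(φ̂) U^H where φ̂ is the Euclidean projection of υ/γ onto the simplex Δ^m. -/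
open Matrix ComplexOrder

noncomputable def ipF {m : ℕ} (X Y : Matrix (Fin m) (Fin m) ℂ) : ℝ :=
  ∑ i, ∑ j, ((starRingEnd ℂ (X i j)) * Y i j).re

lemma sq_norm_c (a : ℂ) : ‖a‖^2 = Complex.normSq a := by
  rw [Complex.sq_norm]

lemma sq_norm_sub_c (a b : ℂ) :
    ‖a - b‖^2 = ‖a‖^2 - 2*((starRingEnd ℂ a) * b).re + ‖b‖^2 := by
  simp only [sq_norm_c, Complex.normSq_sub, Complex.normSq_apply, Complex.mul_re,
    Complex.conj_re, Complex.conj_im, Complex.sub_re, Complex.sub_im]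
  ring

lemma frobSq_sub_expand {m : ℕ} (X Y : Matrix (Fin m) (Fin m) ℂ) :
    frobSq (X - Y) = frobSq X - 2 * ipF X Y + frobSq Y := by
  simp only [frobSq, ipF, Matrix.sub_apply, Finset.mul_sum, ← Finset.sum_add_distrib,
    ← Finset.sum_sub_distrib]
  exact Finset.sum_congr rfl fun i _ => Finset.sum_congr rfl fun j _ => sq_norm_sub_c _ _

lemma frobSq_nonneg {m : ℕ} (X : Matrix (Fin m) (Fin m) ℂ) : 0 ≤ frobSq X :=
  Finset.sum_nonneg fun i _ => Finset.sum_nonneg fun j _ => sq_nonneg _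

lemma frobSq_eq_zero {m : ℕ} {X : Matrix (Fin m) (Fin m) ℂ} (h : frobSq X ≤ 0) : X = 0 := by
  have h0 : frobSq X = 0 := le_antisymm h (frobSq_nonneg X)
  ext i j
  have h1 := (Finset.sum_eq_zero_iff_of_nonneg
    (fun i _ => Finset.sum_nonneg fun j _ => sq_nonneg ‖X i j‖)).mp h0 i (Finset.mem_univ i)
  have h2 := (Finset.sum_eq_zero_iff_of_nonneg
    (fun j _ => sq_nonneg ‖X i j‖)).mp h1 j (Finset.mem_univ j)
  have h3 : ‖X i j‖ = 0 := by
    have := sq_nonneg ‖X i j‖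
    nlinarith [h2]
  simpa using norm_eq_zero.mp h3

lemma ipF_smul {m : ℕ} (r : ℝ) (X Y : Matrix (Fin m) (Fin m) ℂ) :
    ipF ((r:ℂ) • X) Y = r * ipF X Y := by
  simp only [ipF, Matrix.smul_apply, smul_eq_mul, _root_.map_mul, Finset.mul_sum]
  refine Finset.sum_congr rfl fun i _ => Finset.sum_congr rfl fun j _ => ?_
  rw [Complex.conj_ofReal, mul_assoc, Complex.re_ofReal_mul]

lemma frobSq_smul {m : ℕ} (r : ℝ) (X : Matrix (Fin m) (Fin m) ℂ) :
    frobSq ((r:ℂ) • X) = r^2 * frobSq X := by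
  simp only [frobSq, Matrix.smul_apply, smul_eq_mul, norm_mul, Complex.norm_real,
    Finset.mul_sum, mul_pow]
  refine Finset.sum_congr rfl fun i _ => Finset.sum_congr rfl fun j _ => ?_
  rw [Real.norm_eq_abs, sq_abs]
lemma frobSq_trace {m : ℕ} (X : Matrix (Fin m) (Fin m) ℂ) :
    frobSq X = (Matrix.trace (Xᴴ * X)).re := by
  simp only [Matrix.trace, Matrix.diag, Matrix.mul_apply, Matrix.conjTranspose_apply,
    Complex.re_sum, frobSq]
  rw [Finset.sum_comm]
  refine Finset.sum_congr rfl fun i _ => Finset.sum_congr rfl fun j _ => ?_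
  rw [sq_norm_c, Complex.normSq_apply, Complex.mul_re]
  simp only [RCLike.star_def, Complex.conj_re, Complex.conj_im]
  ring

lemma frobSq_unitary_conj {m : ℕ} (U X : Matrix (Fin m) (Fin m) ℂ)
    (hU : Uᴴ * U = 1) : frobSq (Uᴴ * X * U) = frobSq X := by
  have hUU : U * Uᴴ = 1 := mul_eq_one_comm.mp hU
  rw [frobSq_trace, frobSq_trace]
  congr 1
  have h1 : (Uᴴ * X * U)ᴴ * (Uᴴ * X * U) = Uᴴ * (Xᴴ * X) * U := by
    simp only [Matrix.conjTranspose_mul, Matrix.conjTranspose_conjTranspose]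
    simp only [Matrix.mul_assoc]
    rw [← Matrix.mul_assoc U Uᴴ, hUU, Matrix.one_mul]
  rw [h1, Matrix.mul_assoc, Matrix.trace_mul_comm,
    Matrix.mul_assoc (Xᴴ * X) U Uᴴ, hUU, Matrix.mul_one]

lemma frobSq_diagonal {m : ℕ} (v : Fin m → ℂ) :
    frobSq (Matrix.diagonal v) = ∑ i, ‖v i‖^2 := by
  unfold frobSq
  refine Finset.sum_congr rfl fun i _ => ?_
  rw [Finset.sum_eq_single i]
  · simp [Matrix.diagonal_apply_eq]
  · intro j _ hj
    rw [Matrix.diagonal_apply_ne v (Ne.symm hj)]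
    simp
  · simp

lemma re_diag_nonneg {m : ℕ} {C : Matrix (Fin m) (Fin m) ℂ} (hC : C.PosSemidef) (i : Fin m) :
    0 ≤ (C i i).re ∧ (C i i).im = 0 := by
  have h := hC.diag_nonneg (i := i)
  have h2 : (0:ℂ) ≤ C i i := by
    simpa [Matrix.mulVec_single, dotProduct, Pi.single_apply] using h
  rw [Complex.le_def] at h2
  exact ⟨h2.1, h2.2.symm⟩

lemma lower_bound {m : ℕ} (d : Fin m → ℝ) (C : Matrix (Fin m) (Fin m) ℂ) :
    ∑ i, (d i - (C i i).re)^2 ≤ frobSq (Matrix.diagonal (fun i => (d i : ℂ)) - C) := by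
  unfold frobSq
  have step1 : ∀ i : Fin m, (d i - (C i i).re)^2
      ≤ ‖(Matrix.diagonal (fun i => (d i : ℂ)) - C) i i‖^2 := by
    intro i
    have : ((Matrix.diagonal (fun i => (d i : ℂ)) - C) i i).re = d i - (C i i).re := by
      simp [Matrix.sub_apply, Matrix.diagonal_apply_eq]
    rw [← this, sq_norm_c, Complex.normSq_apply]
    nlinarith [sq_nonneg ((Matrix.diagonal (fun i => (d i : ℂ)) - C) i i).im]
  calc ∑ i, (d i - (C i i).re)^2
      ≤ ∑ i, ‖(Matrix.diagonal (fun i => (d i : ℂ)) - C) i i‖^2 :=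
        Finset.sum_le_sum fun i _ => step1 i
    _ ≤ ∑ i, ∑ j, ‖(Matrix.diagonal (fun i => (d i : ℂ)) - C) i j‖^2 :=
        Finset.sum_le_sum fun i _ =>
          Finset.single_le_sum
            (f := fun j => ‖(Matrix.diagonal (fun i => (d i : ℂ)) - C) i j‖^2)
            (fun j _ => sq_nonneg _) (Finset.mem_univ i)

lemma parallelogram_c (a x y : ℂ) :
    ‖a - x‖^2 + ‖a - y‖^2 = 2 * ‖a - (2⁻¹:ℂ)*(x+y)‖^2 + 2⁻¹ * ‖x - y‖^2 := by
  have h2 : (2⁻¹:ℂ) = ((2⁻¹:ℝ):ℂ) := by norm_num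
  simp only [sq_norm_c, Complex.normSq_apply, Complex.sub_re, Complex.sub_im, h2,
    Complex.re_ofReal_mul, Complex.im_ofReal_mul, Complex.add_re, Complex.add_im]
  ring

lemma parallelogram {m : ℕ} (A X Y : Matrix (Fin m) (Fin m) ℂ) :
    frobSq (A - X) + frobSq (A - Y)
      = 2 * frobSq (A - (2⁻¹:ℂ) • (X + Y)) + 2⁻¹ * frobSq (X - Y) := by
  simp only [frobSq, Finset.mul_sum, ← Finset.sum_add_distrib]
  refine Finset.sum_congr rfl fun i _ => ?_
  refine Finset.sum_congr rfl fun j _ => ?_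
  exact parallelogram_c (A i j) (X i j) (Y i j)
/-- For Hermitian `Υ`, `0 ≤ λ < 1/n` and `γ = 1 − nλ`, minimizing
`B ↦ (1/n)‖Υ − B‖₂² − λ‖B‖₂²` over `{B ⪰ 0, tr B = 1}` is the same as the
Frobenius projection of `Υ/γ` onto that set; moreover, if `Υ = U diag(υ) Uᴴ`
is an eigendecomposition and `φ̂` is the Euclidean projection of `υ/γ` onto
the simplex `Δ^m`, the minimizer equals `U diag(φ̂) Uᴴ`. -/
theorem stmt_17 (m n : ℕ) (hn : 0 < n)
    (Υ : Matrix (Fin m) (Fin m) ℂ) (hΥ : Υ.IsHermitian)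
    (lam : ℝ) (hlam : 0 ≤ lam) (hlam' : lam < 1 / n)
    (γ : ℝ) (hγ : γ = 1 - n * lam)
    (f : Matrix (Fin m) (Fin m) ℂ → ℝ)
    (hf : ∀ B, f B = (1 / n : ℝ) * frobSq (Υ - B) - lam * frobSq B) :
    (∀ Bhat : Matrix (Fin m) (Fin m) ℂ, Bhat.PosSemidef → Bhat.trace = 1 →
      ((∀ B : Matrix (Fin m) (Fin m) ℂ, B.PosSemidef → B.trace = 1 →
          f Bhat ≤ f B) ↔
       (∀ B : Matrix (Fin m) (Fin m) ℂ, B.PosSemidef → B.trace = 1 →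
          frobSq ((γ⁻¹ : ℂ) • Υ - Bhat) ≤ frobSq ((γ⁻¹ : ℂ) • Υ - B)))) ∧
    (∀ (U : Matrix (Fin m) (Fin m) ℂ) (υ : Fin m → ℝ),
      Uᴴ * U = 1 → Υ = U * Matrix.diagonal (fun i => (υ i : ℂ)) * Uᴴ →
      ∀ φhat ∈ stdSimplex ℝ (Fin m),
        (∀ φ ∈ stdSimplex ℝ (Fin m),
          ∑ i, (υ i / γ - φhat i) ^ 2 ≤ ∑ i, (υ i / γ - φ i) ^ 2) →
        ((∀ B : Matrix (Fin m) (Fin m) ℂ, B.PosSemidef → B.trace = 1 →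
            f (U * Matrix.diagonal (fun i => (φhat i : ℂ)) * Uᴴ) ≤ f B) ∧
         (∀ Bhat : Matrix (Fin m) (Fin m) ℂ, Bhat.PosSemidef → Bhat.trace = 1 →
            (∀ B : Matrix (Fin m) (Fin m) ℂ, B.PosSemidef → B.trace = 1 →
              f Bhat ≤ f B) →
            Bhat = U * Matrix.diagonal (fun i => (φhat i : ℂ)) * Uᴴ))) := by
  have hn' : (0:ℝ) < n := by exact_mod_cast hn
  have hγpos : 0 < γ := by
    have h1 : lam * n < 1 := (lt_div_iff₀ hn').mp hlam'
    rw [hγ]; nlinarith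
  have hγne : γ ≠ 0 := ne_of_gt hγpos
  have hcoe : ((γ:ℂ))⁻¹ = (((γ⁻¹ : ℝ)) : ℂ) := by
    rw [Complex.ofReal_inv]
  set A : Matrix (Fin m) (Fin m) ℂ := (γ⁻¹ : ℂ) • Υ with hA
  have hkey : ∀ B, (n:ℝ) * f B = γ * frobSq (A - B) + (1 - γ⁻¹) * frobSq Υ := by
    intro B
    rw [hf, hA, hcoe, frobSq_sub_expand Υ B, frobSq_sub_expand, ipF_smul, frobSq_smul]
    have hinv : γ * γ⁻¹ = 1 := mul_inv_cancel₀ hγne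
    have hninv : (n:ℝ) * (1/n) = 1 := by field_simp
    linear_combination (frobSq Υ - 2*ipF Υ B + frobSq B) * hninv
      + (2*ipF Υ B - γ⁻¹*frobSq Υ) * hinv + (-frobSq B) * hγ
  have hequiv : ∀ B₁ B₂, (f B₁ ≤ f B₂ ↔ frobSq (A - B₁) ≤ frobSq (A - B₂)) := by
    intro B₁ B₂
    constructor
    · intro h
      have h1 := mul_le_mul_of_nonneg_left h (le_of_lt hn')
      rw [hkey B₁, hkey B₂] at h1
      have h2 : γ * frobSq (A - B₁) ≤ γ * frobSq (A - B₂) := by linarith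
      exact le_of_mul_le_mul_left h2 hγpos
    · intro h
      have h2 : (n:ℝ) * f B₁ ≤ (n:ℝ) * f B₂ := by
        rw [hkey B₁, hkey B₂]
        nlinarith
      exact le_of_mul_le_mul_left h2 hn'
  constructor
  · intro Bhat _ _
    constructor
    · intro h B hB ht; exact (hequiv Bhat B).mp (h B hB ht)
    · intro h B hB ht; exact (hequiv Bhat B).mpr (h B hB ht)
  · intro U υ hU hdecomp φhat hφhat hproj
    have hUU : U * Uᴴ = 1 := mul_eq_one_comm.mp hU
    set Dm : Matrix (Fin m) (Fin m) ℂ := Matrix.diagonal (fun i => ((υ i / γ : ℝ) : ℂ)) with hDm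
    set Bc : Matrix (Fin m) (Fin m) ℂ := U * Matrix.diagonal (fun i => (φhat i : ℂ)) * Uᴴ with hBc
    have hAeq : A = U * Dm * Uᴴ := by
      have hfun : ((γ:ℂ)⁻¹ • fun i => ((υ i : ℂ))) = fun i => ((υ i / γ : ℝ) : ℂ) := by
        funext i
        rw [Pi.smul_apply, smul_eq_mul, hcoe, ← Complex.ofReal_mul]
        congr 1
        field_simp
      rw [hA, hdecomp, ← Matrix.smul_mul, ← Matrix.mul_smul, ← Matrix.diagonal_smul, hfun]
    -- unitary conj of A - B equals Dm - Uᴴ B U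
    have hconj : ∀ B : Matrix (Fin m) (Fin m) ℂ, Uᴴ * (A - B) * U = Dm - Uᴴ * B * U := by
      intro B
      rw [hAeq, Matrix.mul_sub, Matrix.sub_mul]
      congr 1
      calc Uᴴ * (U * Dm * Uᴴ) * U = Uᴴ * U * Dm * (Uᴴ * U) := by
            simp only [Matrix.mul_assoc]
        _ = Dm := by rw [hU, Matrix.one_mul, Matrix.mul_one]
    have hfrobconj : ∀ B : Matrix (Fin m) (Fin m) ℂ,
        frobSq (A - B) = frobSq (Dm - Uᴴ * B * U) := by
      intro B
      rw [← hconj B, frobSq_unitary_conj U _ hU]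
    -- value at the candidate
    have hBcval : frobSq (A - Bc) = ∑ i, (υ i / γ - φhat i)^2 := by
      have hsub : A - Bc = U * (Dm - Matrix.diagonal (fun i => (φhat i : ℂ))) * Uᴴ := by
        rw [hAeq, hBc, Matrix.mul_sub, Matrix.sub_mul]
      rw [hsub]
      have h2 : frobSq (U * (Dm - Matrix.diagonal (fun i => (φhat i : ℂ))) * Uᴴ)
          = frobSq (Dm - Matrix.diagonal (fun i => (φhat i : ℂ))) := by
        have := frobSq_unitary_conj Uᴴ (Dm - Matrix.diagonal (fun i => (φhat i : ℂ))) (by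
          rw [Matrix.conjTranspose_conjTranspose]; exact hUU)
        rwa [Matrix.conjTranspose_conjTranspose] at this
      rw [h2, hDm, Matrix.diagonal_sub, frobSq_diagonal]
      refine Finset.sum_congr rfl fun i _ => ?_
      rw [← Complex.ofReal_sub, Complex.norm_real, Real.norm_eq_abs, sq_abs]
    -- lower bound for all feasible B
    have hlow : ∀ B : Matrix (Fin m) (Fin m) ℂ, B.PosSemidef → B.trace = 1 →
        ∑ i, (υ i / γ - φhat i)^2 ≤ frobSq (A - B) := by
      intro B hB htr
      have hC : (Uᴴ * B * U).PosSemidef := hB.conjTranspose_mul_mul_same U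
      set C := Uᴴ * B * U with hCdef
      have hdg := fun i => re_diag_nonneg hC i
      have htrC : Matrix.trace C = 1 := by
        rw [hCdef, Matrix.trace_mul_comm, ← Matrix.mul_assoc, hUU, Matrix.one_mul, htr]
      have hsum : ∑ i, (C i i).re = 1 := by
        have h := congrArg Complex.re htrC
        simpa [Matrix.trace, Matrix.diag, Complex.re_sum] using h
      have hmem : (fun i => (C i i).re) ∈ stdSimplex ℝ (Fin m) :=
        ⟨fun i => (hdg i).1, hsum⟩
      calc ∑ i, (υ i / γ - φhat i)^2
          ≤ ∑ i, (υ i / γ - (C i i).re)^2 := hproj _ hmem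
        _ ≤ frobSq (Dm - C) := lower_bound (fun i => υ i / γ) C
        _ = frobSq (A - B) := (hfrobconj B).symm
    -- candidate feasibility
    have hBcPSD : Bc.PosSemidef := by
      rw [hBc]
      exact (Matrix.PosSemidef.diagonal fun i =>
        Complex.zero_le_real.mpr (hφhat.1 i)).mul_mul_conjTranspose_same U
    have hBctr : Bc.trace = 1 := by
      rw [hBc, Matrix.trace_mul_comm, ← Matrix.mul_assoc, hU, Matrix.one_mul,
        Matrix.trace_diagonal, ← Complex.ofReal_sum, hφhat.2, Complex.ofReal_one]
    constructor
    · intro B hB ht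
      exact (hequiv Bc B).mpr (by rw [hBcval]; exact hlow B hB ht)
    · intro Bhat hBhat htrBhat hopt
      have h1 : frobSq (A - Bhat) ≤ frobSq (A - Bc) :=
        (hequiv Bhat Bc).mp (hopt Bc hBcPSD hBctr)
      have h2 : frobSq (A - Bhat) = ∑ i, (υ i / γ - φhat i)^2 :=
        le_antisymm (h1.trans_eq hBcval) (hlow Bhat hBhat htrBhat)
      -- midpoint
      set M : Matrix (Fin m) (Fin m) ℂ := (2⁻¹ : ℂ) • (Bhat + Bc) with hM
      have hMPSD : M.PosSemidef := by
        refine Matrix.posSemidef_iff_dotProduct_mulVec.mpr ⟨?_, ?_⟩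
        · rw [hM]
          have hH : (Bhat + Bc).IsHermitian := hBhat.1.add hBcPSD.1
          unfold Matrix.IsHermitian at *
          rw [Matrix.conjTranspose_smul, hH]
          congr 1
          simp [starRingEnd_apply]
        · intro x
          rw [hM, Matrix.smul_mulVec, Matrix.add_mulVec, dotProduct_smul,
            dotProduct_add]
          have hq1 := hBhat.dotProduct_mulVec_nonneg x
          have hq2 := hBcPSD.dotProduct_mulVec_nonneg x
          have h05 : (0:ℂ) ≤ (2⁻¹ : ℂ) := by
            rw [show ((2⁻¹ : ℂ)) = (((2⁻¹ : ℝ)) : ℂ) by norm_num]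
            exact Complex.zero_le_real.mpr (by norm_num)
          rw [smul_eq_mul]
          exact mul_nonneg h05 (add_nonneg hq1 hq2)
      have hMtr : M.trace = 1 := by
        rw [hM, Matrix.trace_smul, Matrix.trace_add, htrBhat, hBctr, smul_eq_mul]
        norm_num
      have hMlow := hlow M hMPSD hMtr
      have hpar := parallelogram A Bhat Bc
      rw [hM] at hMlow
      have hzero : frobSq (Bhat - Bc) ≤ 0 := by
        rw [h2, hBcval] at hpar
        nlinarith [hpar, hMlow]
      have := frobSq_eq_zero hzero
      rw [hBc] at this ⊢
      exact sub_eq_zero.mp this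
end
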